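/- Let X and Y be finite sets, {ρ_x}_{x∈X} d×d density matrices, π a probability distribution on X, {M_y}_{y∈Y} a POVM, with ρ̄ = Σ_x π_x ρ_x invertible. With the dual pair M'_x = π_x ρ̄^{−1/2} ρ_x ρ̄^{−1/2}, π'_y = Tr(ρ̄ M_y), ρ'_y = ρ̄^{1/2} M_y ρ̄^{1/2}/π'_y (for π'_y > 0), the joint distributions of the two pairs coincide: for all x ∈ X and y ∈ Y, π_x · Tr(ρ_x M_y) = π'_y · Tr(ρ'_y M'_x) (both sides being 0 when π'_y = 0). Consequently the Shannon mutual informations coincide: I(𝓔, 𝓜) = I(𝓔', 𝓜'), where for a joint probability mass function P(x,y) the mutual information is Σ_{x,y} P(x,y) log(P(x,y)/(P(x,·)P(·,y))). -/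

import Mathlib

open Matrix
open scoped ComplexOrder Classical BigOperators

/-- The (Hermitian positive semidefinite) square root of a positive semidefinite
complex matrix; junk value `0` if the matrix is not positive semidefinite. -/
noncomputable def msqrt {d : ℕ} (A : Matrix (Fin d) (Fin d) ℂ) :
    Matrix (Fin d) (Fin d) ℂ :=
  if h : A.PosSemidef then
    (h.1.eigenvectorUnitary : Matrix (Fin d) (Fin d) ℂ) *
      diagonal ((↑) ∘ (Real.sqrt ·) ∘ h.1.eigenvalues) *
      (star h.1.eigenvectorUnitary : Matrix (Fin d) (Fin d) ℂ) else 0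

/-- Shannon mutual information of a joint probability mass function `P` on
`X × Y`: `Σ_{x,y} P(x,y) log (P(x,y)/(P(x,·) P(·,y)))`. -/
noncomputable def mutInfo {X Y : Type*} [Fintype X] [Fintype Y]
    (P : X → Y → ℝ) : ℝ :=
  ∑ x, ∑ y, P x y * Real.log (P x y / ((∑ y', P x y') * (∑ x', P x' y)))

lemma msqrt_mul_self_aux {d : ℕ} {A : Matrix (Fin d) (Fin d) ℂ} (h : A.PosSemidef) :
    msqrt A * msqrt A = A := by
  rw [msqrt, dif_pos h]
  have hU : (star h.1.eigenvectorUnitary : Matrix (Fin d) (Fin d) ℂ) *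
      (h.1.eigenvectorUnitary : Matrix (Fin d) (Fin d) ℂ) = 1 := Unitary.coe_star_mul_self _
  have hD : diagonal (((↑) ∘ (Real.sqrt ·) ∘ h.1.eigenvalues : Fin d → ℂ)) *
      diagonal ((↑) ∘ (Real.sqrt ·) ∘ h.1.eigenvalues) =
      diagonal (RCLike.ofReal ∘ h.1.eigenvalues) := by
    rw [diagonal_mul_diagonal]
    congr 1; funext i
    simp only [Function.comp_apply]
    rw [← Complex.ofReal_mul, Real.mul_self_sqrt (h.eigenvalues_nonneg i)]
    rfl
  conv_rhs => rw [h.1.spectral_theorem, Unitary.conjStarAlgAut_apply]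
  calc _ = (h.1.eigenvectorUnitary : Matrix (Fin d) (Fin d) ℂ) *
        diagonal ((↑) ∘ (Real.sqrt ·) ∘ h.1.eigenvalues) *
        ((star h.1.eigenvectorUnitary : Matrix (Fin d) (Fin d) ℂ) *
        (h.1.eigenvectorUnitary : Matrix (Fin d) (Fin d) ℂ)) *
        diagonal ((↑) ∘ (Real.sqrt ·) ∘ h.1.eigenvalues) *
        (star h.1.eigenvectorUnitary : Matrix (Fin d) (Fin d) ℂ) := by
          simp only [Matrix.mul_assoc]
    _ = _ := by
          rw [hU, Matrix.mul_one, Matrix.mul_assoc _ (diagonal _) (diagonal _), hD]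

lemma msqrt_conjTranspose_aux {d : ℕ} {A : Matrix (Fin d) (Fin d) ℂ} (h : A.PosSemidef) :
    (msqrt A)ᴴ = msqrt A := by
  rw [msqrt, dif_pos h]
  simp only [conjTranspose_mul, diagonal_conjTranspose, Matrix.mul_assoc]
  have : star (((↑) ∘ (Real.sqrt ·) ∘ h.1.eigenvalues : Fin d → ℂ)) =
      ((↑) ∘ (Real.sqrt ·) ∘ h.1.eigenvalues) := by
    funext i; simp
  rw [this]
  simp [Matrix.star_eq_conjTranspose, Matrix.mul_assoc]

lemma trace_re_nonneg_aux {d : ℕ} {A : Matrix (Fin d) (Fin d) ℂ} (hA : A.PosSemidef) :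
    0 ≤ A.trace.re := by
  have h : 0 ≤ A.trace := by
    rw [Matrix.trace]
    apply Finset.sum_nonneg
    intro i _
    simpa using hA.diag_nonneg (i := i)
  exact (Complex.le_def.mp h).1

lemma trace_mul_re_nonneg_aux {d : ℕ} {A B : Matrix (Fin d) (Fin d) ℂ}
    (hA : A.PosSemidef) (hB : B.PosSemidef) : 0 ≤ ((A * B).trace).re := by
  set T := msqrt B with hT
  have h1 : A * B = A * T * T := by rw [Matrix.mul_assoc, msqrt_mul_self_aux hB]
  have h2 : (A * T * T).trace = (T * A * T).trace := by
    rw [Matrix.trace_mul_comm (A * T) T, ← Matrix.mul_assoc]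
  have hpsd : (T * A * T).PosSemidef := by
    have := hA.mul_mul_conjTranspose_same T
    rwa [msqrt_conjTranspose_aux hB] at this
  rw [h1, h2]
  exact trace_re_nonneg_aux hpsd

/-- Finite-dimensional ensemble–observable duality (Proposition 1, equality
(II)): the joint distributions of the pair `(𝓔, 𝓜)` and of the dual pair
`(𝓔', 𝓜')` coincide, `π_x Tr(ρ_x M_y) = π'_y Tr(ρ'_y M'_x)` (both sides being
`0` when `π'_y = 0`), hence their Shannon mutual informations coincide. -/
theorem stmt16 {X Y : Type*} [Fintype X] [Fintype Y] {d : ℕ}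
    (ρ : X → Matrix (Fin d) (Fin d) ℂ)
    (hρ : ∀ x, (ρ x).PosSemidef) (hρtr : ∀ x, (ρ x).trace = 1)
    (π : X → ℝ) (hπ : ∀ x, 0 ≤ π x) (hπ1 : ∑ x, π x = 1)
    (M : Y → Matrix (Fin d) (Fin d) ℂ)
    (hM : ∀ y, (M y).PosSemidef) (hM1 : ∑ y, M y = 1)
    (ρbar : Matrix (Fin d) (Fin d) ℂ) (hbar : ρbar = ∑ x, (π x : ℂ) • ρ x)
    (hinv : IsUnit ρbar.det)
    (M' : X → Matrix (Fin d) (Fin d) ℂ)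
    (hM' : M' = fun x => (π x : ℂ) • ((msqrt ρbar)⁻¹ * ρ x * (msqrt ρbar)⁻¹))
    (π' : Y → ℝ) (hπ' : π' = fun y => ((ρbar * M y).trace).re)
    (ρ' : Y → Matrix (Fin d) (Fin d) ℂ)
    (hρ' : ρ' = fun y => ((π' y : ℂ))⁻¹ • (msqrt ρbar * M y * msqrt ρbar)) :
    (∀ x y, π x * ((ρ x * M y).trace).re = π' y * ((ρ' y * M' x).trace).re) ∧
    mutInfo (fun x y => π x * ((ρ x * M y).trace).re)
      = mutInfo (fun x y => π' y * ((ρ' y * M' x).trace).re) := by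
  -- ρbar is positive semidefinite
  have hbarP : ρbar.PosSemidef := by
    rw [hbar]
    have each : ∀ x : X, ((π x : ℂ) • ρ x).PosSemidef := by
      intro x
      refine ⟨?_, fun v => ?_⟩
      · unfold Matrix.IsHermitian
        rw [Matrix.conjTranspose_smul, (hρ x).1.eq]
        congr 1
        simp [Complex.ext_iff]
      · have h1 : (0:ℂ) ≤ (π x : ℂ) := by
          rw [Complex.le_def]; simp [hπ x]
        exact ((hρ x).smul h1).2 v
    exact Finset.sum_induction _ _ (fun a b ha hb => ha.add hb)
      Matrix.PosSemidef.zero (fun x _ => each x)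
  set S : Matrix (Fin d) (Fin d) ℂ := msqrt ρbar with hS
  have hSdef : S = msqrt ρbar := hS
  have hSS : S * S = ρbar := by rw [hSdef]; exact msqrt_mul_self_aux hbarP
  have hSdet : IsUnit S.det := by
    have : S.det * S.det = ρbar.det := by rw [← Matrix.det_mul, hSS]
    exact isUnit_of_mul_isUnit_left (this ▸ hinv)
  have hSiS : S⁻¹ * S = 1 := Matrix.nonsing_inv_mul S hSdet
  have hSSi : S * S⁻¹ = 1 := Matrix.mul_nonsing_inv S hSdet
  -- key trace identity
  have key : ∀ x y, ((ρ' y * M' x).trace)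
      = ((π' y : ℂ))⁻¹ * (π x : ℂ) * ((ρ x * M y).trace) := by
    intro x y
    have hmat : (S * M y * S) * (S⁻¹ * ρ x * S⁻¹) = S * (M y * (ρ x * S⁻¹)) := by
      have : (S * M y * S) * (S⁻¹ * ρ x * S⁻¹)
          = S * M y * ((S * S⁻¹) * ρ x * S⁻¹) := by
        simp only [Matrix.mul_assoc]
      rw [this, hSSi, Matrix.one_mul]
      simp only [Matrix.mul_assoc]
    have htr : ((S * M y * S) * (S⁻¹ * ρ x * S⁻¹)).trace = (ρ x * M y).trace := by
      rw [hmat, Matrix.trace_mul_comm S (M y * (ρ x * S⁻¹))]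
      have : M y * (ρ x * S⁻¹) * S = M y * ρ x := by
        simp only [Matrix.mul_assoc, hSiS, Matrix.mul_one]
      rw [this, Matrix.trace_mul_comm]
    calc (ρ' y * M' x).trace
        = (((π' y : ℂ))⁻¹ • (S * M y * S) * ((π x : ℂ) • (S⁻¹ * ρ x * S⁻¹))).trace := by
          rw [hρ', hM']
      _ = ((π' y : ℂ))⁻¹ * (π x : ℂ) * ((S * M y * S) * (S⁻¹ * ρ x * S⁻¹)).trace := by
          rw [Matrix.smul_mul, Matrix.mul_smul, smul_smul, Matrix.trace_smul, smul_eq_mul]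
      _ = ((π' y : ℂ))⁻¹ * (π x : ℂ) * ((ρ x * M y).trace) := by rw [htr]
  -- pointwise equality
  have main : ∀ x y, π x * ((ρ x * M y).trace).re = π' y * ((ρ' y * M' x).trace).re := by
    intro x y
    have hre : ((ρ' y * M' x).trace).re = (π' y)⁻¹ * π x * ((ρ x * M y).trace).re := by
      rw [key x y]
      have : ((π' y : ℂ))⁻¹ * (π x : ℂ) = (((π' y)⁻¹ * π x : ℝ) : ℂ) := by
        push_cast; ring
      rw [this, Complex.re_ofReal_mul]
    rw [hre]
    by_cases hzero : π' y = 0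
    · -- show LHS = 0 too
      rw [hzero]
      simp only [zero_mul]
      -- π' y = ∑ x', π x' * re tr(ρ x' * M y), all terms nonneg, sum zero
      have hsum : π' y = ∑ x', π x' * ((ρ x' * M y).trace).re := by
        rw [hπ']
        simp only
        rw [hbar, Matrix.sum_mul, Matrix.trace_sum]
        rw [Complex.re_sum]
        congr 1; funext x'
        rw [Matrix.smul_mul, Matrix.trace_smul, smul_eq_mul, Complex.re_ofReal_mul]
      have hterm : ∀ x' ∈ Finset.univ, 0 ≤ π x' * ((ρ x' * M y).trace).re :=
        fun x' _ => mul_nonneg (hπ x') (trace_mul_re_nonneg_aux (hρ x') (hM y))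
      have := (Finset.sum_eq_zero_iff_of_nonneg hterm).mp (by rw [← hsum, hzero])
      exact this x (Finset.mem_univ x)
    · field_simp
  refine ⟨main, ?_⟩
  have : (fun x y => π x * ((ρ x * M y).trace).re)
      = (fun x y => π' y * ((ρ' y * M' x).trace).re) :=
    funext fun x => funext fun y => main x y
  rw [this]
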